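/- Let p ≤ α and define for the CSM stopping time τ = inf{n : S_n ≥ u_n or S_n ≤ l_n} (with boundaries l_n, u_n as in the confidence sequence method with parameters α, ε) the estimator p̂ = S_τ/τ if τ < ∞ and p̂ = α if τ = ∞. Then ℙ_p(p̂ > α) < ε. -/

import Mathlib

open MeasureTheory ProbabilityTheory

/-- The binomial probability mass function `b(n,p,x) = C(n,x) p^x (1-p)^(n-x)`. -/
noncomputable def binomPMF (n : ℕ) (p : ℝ) (x : ℕ) : ℝ :=
  (n.choose x : ℝ) * p ^ x * (1 - p) ^ (n - x)

open Classical in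
/-- CSM upper stopping boundary `u_n = max{k : (n+1) b(n,α,k) > ε} + 1`. -/
noncomputable def csmUpper (α ε : ℝ) (n : ℕ) : ℤ :=
  ((((Finset.range (n + 1)).filter
      (fun k => ε < ((n : ℝ) + 1) * binomPMF n α k)).max.unbotD 0 : ℕ) : ℤ) + 1

open Classical in
/-- CSM lower stopping boundary `l_n = min{k : (n+1) b(n,α,k) > ε} − 1`. -/
noncomputable def csmLower (α ε : ℝ) (n : ℕ) : ℤ :=
  ((((Finset.range (n + 1)).filter
      (fun k => ε < ((n : ℝ) + 1) * binomPMF n α k)).min.untopD 0 : ℕ) : ℤ) - 1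

/-- The CSM stopping condition at step `n`: the partial sum hits the upper or lower boundary. -/
def csmStop (α ε : ℝ) (S : ℕ → ℤ) (n : ℕ) : Prop :=
  csmUpper α ε n ≤ S n ∨ S n ≤ csmLower α ε n

open Classical in
/-- The CSM p-value estimate `p̂ = S_τ/τ` if `τ < ∞`, and `p̂ = α` otherwise, where
`τ = inf{n : S_n ≥ u_n or S_n ≤ l_n}`. -/
noncomputable def csmEstimate (α ε : ℝ) (S : ℕ → ℤ) : ℝ :=
  if h : ∃ n, csmStop α ε S n then
    ((S (sInf {n : ℕ | csmStop α ε S n}) : ℝ) / ((sInf {n : ℕ | csmStop α ε S n} : ℕ) : ℝ))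
  else α

/- ### auxiliary -/

open Classical in
noncomputable def bset (α ε : ℝ) (n : ℕ) : Finset ℕ :=
  (Finset.range (n + 1)).filter (fun k => ε < ((n : ℝ) + 1) * binomPMF n α k)

lemma csmUpper_eq (α ε : ℝ) (n : ℕ) :
    csmUpper α ε n = (((bset α ε n).max.unbotD 0 : ℕ) : ℤ) + 1 := rfl

lemma csmLower_eq (α ε : ℝ) (n : ℕ) :
    csmLower α ε n = (((bset α ε n).min.untopD 0 : ℕ) : ℤ) - 1 := rfl

lemma mem_bset {α ε : ℝ} {n k : ℕ} :
    k ∈ bset α ε n ↔ k < n + 1 ∧ ε < ((n : ℝ) + 1) * binomPMF n α k := by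
  classical
  simp [bset, Finset.mem_filter, Finset.mem_range]

section Mode

variable {α ε : ℝ} (hα : α ∈ Set.Ioo (0:ℝ) 1)

lemma binomPMF_pos (hα : α ∈ Set.Ioo (0:ℝ) 1) {n k : ℕ} (hk : k ≤ n) :
    0 < binomPMF n α k := by
  have h1 : (0:ℝ) < (n.choose k : ℝ) := by exact_mod_cast Nat.choose_pos hk
  have h2 : (0:ℝ) < α := hα.1
  have h3 : (0:ℝ) < 1 - α := by linarith [hα.2]
  unfold binomPMF
  positivity

lemma binomPMF_step {n k : ℕ} (hk : k < n) (α : ℝ) :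
    binomPMF n α (k + 1) * (((k:ℝ) + 1) * (1 - α)) =
      binomPMF n α k * (((n : ℝ) - k) * α) := by
  have hc : ((n.choose (k+1)) * (k+1) : ℕ) = (n.choose k) * (n - k) :=
    Nat.choose_succ_right_eq n k
  have hcR : ((n.choose (k+1) : ℝ)) * ((k:ℝ) + 1) = (n.choose k : ℝ) * ((n:ℝ) - k) := by
    have := congrArg (Nat.cast (R := ℝ)) hc
    push_cast [Nat.cast_sub hk.le] at this
    linarith [this]
  have e1 : (1-α)^(n-k) = (1-α)^(n-(k+1)) * (1-α) := by
    rw [← pow_succ]; congr 1; omega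
  have e2 : α ^ (k+1) = α ^ k * α := pow_succ α k
  unfold binomPMF
  rw [e1, e2]
  linear_combination (α ^ k * α * ((1-α)^(n-(k+1)) * (1-α))) * hcR

lemma binomPMF_le_succ (hα : α ∈ Set.Ioo (0:ℝ) 1) {n k : ℕ} (hk : k < n)
    (h : (k:ℝ) + 1 ≤ ((n:ℝ) + 1) * α) :
    binomPMF n α k ≤ binomPMF n α (k + 1) := by
  have hstep := binomPMF_step hk α
  have hb : 0 < binomPMF n α k := binomPMF_pos hα hk.le
  have hb' : 0 < binomPMF n α (k+1) := binomPMF_pos hα hk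
  have hKpos : (0:ℝ) < ((k:ℝ) + 1) * (1 - α) := by
    have := hα.2; have := hα.1
    have : (0:ℝ) < 1 - α := by linarith
    positivity
  have hle : ((k:ℝ) + 1) * (1 - α) ≤ ((n:ℝ) - k) * α := by nlinarith [hα.1, hα.2]
  have : binomPMF n α k * (((k:ℝ) + 1) * (1 - α)) ≤ binomPMF n α k * (((n:ℝ) - k) * α) :=
    mul_le_mul_of_nonneg_left hle hb.le
  rw [← hstep] at this
  exact le_of_mul_le_mul_right this hKpos

lemma binomPMF_succ_le (hα : α ∈ Set.Ioo (0:ℝ) 1) {n k : ℕ} (hk : k < n)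
    (h : ((n:ℝ) + 1) * α ≤ (k:ℝ) + 1) :
    binomPMF n α (k + 1) ≤ binomPMF n α k := by
  have hstep := binomPMF_step hk α
  have hb' : 0 < binomPMF n α (k+1) := binomPMF_pos hα hk
  have hMpos : (0:ℝ) < ((n:ℝ) - k) * α := by
    have h1 := hα.1
    have h2 : (k:ℝ) < (n:ℝ) := by exact_mod_cast hk
    nlinarith
  have hge : ((n:ℝ) - k) * α ≤ ((k:ℝ) + 1) * (1 - α) := by nlinarith [hα.1, hα.2]
  have : binomPMF n α (k+1) * (((n:ℝ) - k) * α) ≤ binomPMF n α (k+1) * (((k:ℝ) + 1) * (1 - α)) :=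
    mul_le_mul_of_nonneg_left hge hb'.le
  rw [hstep] at this
  exact le_of_mul_le_mul_right this hMpos

/-- the mode `⌊(n+1)α⌋` dominates all other binomial probabilities -/
lemma binomPMF_le_mode (hα : α ∈ Set.Ioo (0:ℝ) 1) (n : ℕ) {k : ℕ} (hk : k ≤ n) :
    binomPMF n α k ≤ binomPMF n α (Nat.floor (((n:ℝ) + 1) * α)) := by
  set k0 := Nat.floor (((n:ℝ) + 1) * α) with hk0
  have hnn : (0:ℝ) ≤ ((n:ℝ) + 1) * α := by
    have := hα.1; positivity
  have hfl : (k0 : ℝ) ≤ ((n:ℝ) + 1) * α := Nat.floor_le hnn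
  have hfl2 : ((n:ℝ) + 1) * α < (k0 : ℝ) + 1 := Nat.lt_floor_add_one _
  have hk0n : k0 ≤ n := by
    have h1 : ((n:ℝ) + 1) * α < ((n:ℝ) + 1) := by nlinarith [hα.1, hα.2]
    have h2 : ((n:ℝ) + 1) * α < ((n + 1 : ℕ) : ℝ) := by push_cast; linarith
    have := (Nat.floor_lt hnn).2 h2
    omega
  have chainA : ∀ i : ℕ, binomPMF n α (k0 - i) ≤ binomPMF n α k0 := by
    intro i
    induction i with
    | zero => simp
    | succ i ih =>
      rcases Nat.lt_or_ge i k0 with hi | hi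
      · have heq : k0 - (i+1) + 1 = k0 - i := by omega
        have hlt : k0 - (i+1) < n := by omega
        have hcast : ((k0 - (i+1) : ℕ) : ℝ) + 1 ≤ ((n:ℝ) + 1) * α := by
          have h1 : ((k0 - (i+1) : ℕ) : ℝ) + 1 ≤ (k0 : ℝ) := by
            have : (k0 - (i+1)) + 1 ≤ k0 := by omega
            exact_mod_cast this
          linarith
        have := binomPMF_le_succ hα hlt hcast
        rw [heq] at this
        exact this.trans ih
      · have : k0 - (i+1) = k0 - i := by omega
        rw [this]; exact ih
  have chainB : ∀ j : ℕ, k0 ≤ j → j ≤ n → binomPMF n α j ≤ binomPMF n α k0 := by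
    intro j hj hjn
    induction j with
    | zero => rw [show k0 = 0 by omega]
    | succ j ih =>
      rcases Nat.lt_or_ge j k0 with hh | hh
      · have : k0 = j + 1 := by omega
        rw [this]
      · have hlt : j < n := by omega
        have hcast : ((n:ℝ) + 1) * α ≤ (j:ℝ) + 1 := by
          have : (k0:ℝ) ≤ (j:ℝ) := by exact_mod_cast hh
          linarith
        exact (binomPMF_succ_le hα hlt hcast).trans (ih hh (by omega))
  rcases Nat.le_total k k0 with h | h
  · have : k0 - (k0 - k) = k := by omega
    calc binomPMF n α k = binomPMF n α (k0 - (k0 - k)) := by rw [this]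
      _ ≤ _ := chainA _
  · exact chainB k h hk

lemma one_le_mode_val (hα : α ∈ Set.Ioo (0:ℝ) 1) (n : ℕ) :
    1 ≤ ((n:ℝ) + 1) * binomPMF n α (Nat.floor (((n:ℝ) + 1) * α)) := by
  have hsum : ∑ k ∈ Finset.range (n + 1), binomPMF n α k = 1 := by
    have := add_pow α (1 - α) n
    simp only [add_sub_cancel, one_pow] at this
    rw [eq_comm, this]
    unfold binomPMF
    refine Finset.sum_congr rfl fun k _ => by ring
  have hle : ∀ k ∈ Finset.range (n+1),
      binomPMF n α k ≤ binomPMF n α (Nat.floor (((n:ℝ) + 1) * α)) := by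
    intro k hkr
    exact binomPMF_le_mode hα n (by simpa [Nat.lt_succ_iff] using Finset.mem_range.1 hkr)
  calc (1:ℝ) = ∑ k ∈ Finset.range (n + 1), binomPMF n α k := hsum.symm
    _ ≤ ∑ _k ∈ Finset.range (n + 1), binomPMF n α (Nat.floor (((n:ℝ) + 1) * α)) :=
        Finset.sum_le_sum hle
    _ = ((n:ℝ) + 1) * binomPMF n α (Nat.floor (((n:ℝ) + 1) * α)) := by
        rw [Finset.sum_const, Finset.card_range]; push_cast; ring

lemma mode_mem_bset (hα : α ∈ Set.Ioo (0:ℝ) 1) (hε : ε ∈ Set.Ioo (0:ℝ) 1) (n : ℕ) :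
    Nat.floor (((n:ℝ) + 1) * α) ∈ bset α ε n := by
  have hnn : (0:ℝ) ≤ ((n:ℝ) + 1) * α := by
    have := hα.1; positivity
  refine mem_bset.2 ⟨?_, lt_of_lt_of_le hε.2 (one_le_mode_val hα n)⟩
  have : ((n:ℝ) + 1) * α < ((n:ℝ) + 1) := by nlinarith [hα.1, hα.2]
  have h2 : ((n:ℝ)+1) * α < ((n+1 : ℕ) : ℝ) := by push_cast; linarith
  exact (Nat.floor_lt hnn).2 h2

lemma bset_nonempty (hα : α ∈ Set.Ioo (0:ℝ) 1) (hε : ε ∈ Set.Ioo (0:ℝ) 1) (n : ℕ) :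
    (bset α ε n).Nonempty := ⟨_, mode_mem_bset hα hε n⟩

lemma csmUpper_eq_max' (hα : α ∈ Set.Ioo (0:ℝ) 1) (hε : ε ∈ Set.Ioo (0:ℝ) 1) (n : ℕ) :
    csmUpper α ε n = ((bset α ε n).max' (bset_nonempty hα hε n) : ℤ) + 1 := by
  rw [csmUpper_eq]
  congr 2
  rw [← Finset.coe_max' (bset_nonempty hα hε n)]
  rfl

lemma csmLower_eq_min' (hα : α ∈ Set.Ioo (0:ℝ) 1) (hε : ε ∈ Set.Ioo (0:ℝ) 1) (n : ℕ) :
    csmLower α ε n = ((bset α ε n).min' (bset_nonempty hα hε n) : ℤ) - 1 := by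
  rw [csmLower_eq]
  congr 2
  rw [← Finset.coe_min' (bset_nonempty hα hε n)]
  rfl

lemma csmUpper_gt (hα : α ∈ Set.Ioo (0:ℝ) 1) (hε : ε ∈ Set.Ioo (0:ℝ) 1) (n : ℕ) :
    (n:ℝ) * α < ((csmUpper α ε n : ℤ) : ℝ) := by
  rw [csmUpper_eq_max' hα hε n]
  have h1 : Nat.floor (((n:ℝ) + 1) * α) ≤ (bset α ε n).max' (bset_nonempty hα hε n) :=
    Finset.le_max' _ _ (mode_mem_bset hα hε n)
  have h2 : ((n:ℝ) + 1) * α < (Nat.floor (((n:ℝ) + 1) * α) : ℝ) + 1 := Nat.lt_floor_add_one _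
  have h3 : ((Nat.floor (((n:ℝ) + 1) * α) : ℕ) : ℝ) ≤
      (((bset α ε n).max' (bset_nonempty hα hε n) : ℕ) : ℝ) := by exact_mod_cast h1
  have := hα.1
  push_cast
  nlinarith

lemma one_le_csmUpper (α ε : ℝ) (n : ℕ) : 1 ≤ csmUpper α ε n := by
  rw [csmUpper_eq]
  have : (0:ℤ) ≤ (((bset α ε n).max.unbotD 0 : ℕ) : ℤ) := Int.natCast_nonneg _
  omega

lemma csmLower_lt (hα : α ∈ Set.Ioo (0:ℝ) 1) (hε : ε ∈ Set.Ioo (0:ℝ) 1) (n : ℕ) :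
    ((csmLower α ε n : ℤ) : ℝ) < (n:ℝ) * α := by
  rw [csmLower_eq_min' hα hε n]
  have h1 : (bset α ε n).min' (bset_nonempty hα hε n) ≤ Nat.floor (((n:ℝ) + 1) * α) :=
    Finset.min'_le _ _ (mode_mem_bset hα hε n)
  have hnn : (0:ℝ) ≤ ((n:ℝ) + 1) * α := by
    have := hα.1; positivity
  have h2 : (Nat.floor (((n:ℝ) + 1) * α) : ℝ) ≤ ((n:ℝ) + 1) * α := Nat.floor_le hnn
  have h3 : (((bset α ε n).min' (bset_nonempty hα hε n) : ℕ) : ℝ) ≤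
      ((Nat.floor (((n:ℝ) + 1) * α) : ℕ) : ℝ) := by exact_mod_cast h1
  have := hα.2
  push_cast
  nlinarith

lemma upper_tail (hα : α ∈ Set.Ioo (0:ℝ) 1) (hε : ε ∈ Set.Ioo (0:ℝ) 1) {n s : ℕ}
    (hs : s ≤ n) (h : csmUpper α ε n ≤ (s:ℤ)) :
    ((n:ℝ) + 1) * binomPMF n α s ≤ ε := by
  by_contra hcon
  push_neg at hcon
  have hmem : s ∈ bset α ε n := mem_bset.2 ⟨by omega, hcon⟩
  have h1 : s ≤ (bset α ε n).max' (bset_nonempty hα hε n) := Finset.le_max' _ _ hmem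
  rw [csmUpper_eq_max' hα hε n] at h
  have : ((bset α ε n).max' (bset_nonempty hα hε n) : ℤ) + 1 ≤ (s:ℤ) := h
  omega

/- ### the combinatorial weight `W n s = 1/((n+1) C(n,s))` -/

noncomputable def Wt (n s : ℕ) : ℝ := (((n:ℝ) + 1) * (n.choose s : ℝ))⁻¹

lemma Wt_nonneg (n s : ℕ) : 0 ≤ Wt n s := by
  unfold Wt
  positivity

lemma Wt_pos {n s : ℕ} (h : s ≤ n) : 0 < Wt n s := by
  unfold Wt
  have : (0:ℝ) < (n.choose s : ℝ) := by exact_mod_cast Nat.choose_pos h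
  positivity

lemma Wt_succ (n s : ℕ) (h : s ≤ n) :
    Wt n s = Wt (n+1) s + Wt (n+1) (s+1) := by
  unfold Wt
  have h1 : ((n+1).choose (s+1) : ℝ) * ((s:ℝ) + 1) = ((n:ℝ) + 1) * (n.choose s : ℝ) := by
    have := Nat.add_one_mul_choose_eq n s
    exact_mod_cast congrArg (Nat.cast (R := ℝ)) this.symm
  have h2 : ((n+1).choose (s+1) : ℝ) * ((s:ℝ) + 1) = ((n+1).choose s : ℝ) * (((n:ℝ) + 1) - s) := by
    have := Nat.choose_succ_right_eq (n+1) s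
    have hc := congrArg (Nat.cast (R := ℝ)) this
    push_cast [Nat.cast_sub (by omega : s ≤ n + 1)] at hc
    push_cast
    linarith
  have hpos0 : (0:ℝ) < (n.choose s : ℝ) := by exact_mod_cast Nat.choose_pos h
  have hpos1 : (0:ℝ) < ((n+1).choose s : ℝ) := by
    exact_mod_cast Nat.choose_pos (by omega : s ≤ n + 1)
  have hpos2 : (0:ℝ) < ((n+1).choose (s+1) : ℝ) := by
    exact_mod_cast Nat.choose_pos (by omega : s + 1 ≤ n + 1)
  have hn1 : (0:ℝ) < (n:ℝ) + 1 := by positivity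
  have hn2 : (0:ℝ) < (n:ℝ) + 1 + 1 := by positivity
  push_cast
  field_simp
  linear_combination (((n+1).choose s : ℝ) + ((n+1).choose (s+1) : ℝ)) * h1
    - ((n+1).choose (s+1) : ℝ) * h2

/- ### weight comparison: if s/n > α ≥ p then the p-weight of a path is at most the α-weight -/

lemma weight_mono {p α : ℝ} {n s : ℕ} (hp : 0 < p) (hpα : p ≤ α) (hα1 : α < 1)
    (hsn : s ≤ n) (hs : (n:ℝ) * α < s) :
    p ^ s * (1 - p) ^ (n - s) ≤ α ^ s * (1 - α) ^ (n - s) := by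
  have hα0 : 0 < α := lt_of_lt_of_le hp hpα
  have h1α : 0 < 1 - α := by linarith
  have h1p : 0 < 1 - p := by linarith
  have hspos : 0 < s := by
    by_contra hcon
    have : s = 0 := by omega
    subst this
    simp at hs
    have : (0:ℝ) ≤ (n:ℝ) * α := by positivity
    linarith
  have hn : 0 < n := lt_of_lt_of_le hspos hsn
  set x1 : ℝ := p / α with hx1
  set x2 : ℝ := (1 - p) / (1 - α) with hx2
  have hx1p : 0 ≤ x1 := by positivity
  have hx2p : 0 ≤ x2 := by positivity
  set w1 : ℝ := (s:ℝ) / n with hw1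
  set w2 : ℝ := ((n:ℝ) - s) / n with hw2
  have hnR : (0:ℝ) < n := by exact_mod_cast hn
  have hsR : (s:ℝ) ≤ n := by exact_mod_cast hsn
  have hw1p : 0 ≤ w1 := by positivity
  have hw2p : 0 ≤ w2 := div_nonneg (by linarith) hnR.le
  have hwsum : w1 + w2 = 1 := by rw [hw1, hw2]; field_simp; ring
  have hgm := Real.geom_mean_le_arith_mean2_weighted hw1p hw2p hx1p hx2p hwsum
  have hR : w1 * x1 + w2 * x2 ≤ 1 := by
    rw [hw1, hw2, hx1, hx2, div_mul_div_comm, div_mul_div_comm, div_add_div _ _ (by positivity)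
      (by positivity), div_le_one (by positivity)]
    nlinarith [mul_nonneg hnR.le (mul_nonneg (by linarith : (0:ℝ) ≤ (s:ℝ) - (n:ℝ) * α)
      (by linarith : (0:ℝ) ≤ α - p))]
  have hgm1 : x1 ^ w1 * x2 ^ w2 ≤ 1 := hgm.trans hR
  have hgmn : (x1 ^ w1 * x2 ^ w2) ^ n ≤ 1 := by
    calc (x1 ^ w1 * x2 ^ w2) ^ n ≤ 1 ^ n := by
          apply pow_le_pow_left₀ (by positivity) hgm1
      _ = 1 := one_pow n
  have hkey : x1 ^ s * x2 ^ (n - s) ≤ 1 := by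
    have e1 : (x1 ^ w1) ^ n = x1 ^ s := by
      rw [← Real.rpow_natCast (x1 ^ w1) n, ← Real.rpow_mul hx1p]
      rw [hw1, div_mul_cancel₀ _ (by positivity : (n:ℝ) ≠ 0), Real.rpow_natCast]
    have e2 : (x2 ^ w2) ^ n = x2 ^ (n - s) := by
      rw [← Real.rpow_natCast (x2 ^ w2) n, ← Real.rpow_mul hx2p]
      rw [hw2, div_mul_cancel₀ _ (by positivity : (n:ℝ) ≠ 0)]
      rw [show (n:ℝ) - s = ((n - s : ℕ) : ℝ) by
        rw [Nat.cast_sub hsn]]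
      rw [Real.rpow_natCast]
    calc x1 ^ s * x2 ^ (n - s) = (x1 ^ w1 * x2 ^ w2) ^ n := by rw [mul_pow, e1, e2]
      _ ≤ 1 := hgmn
  have hsplit : p ^ s * (1 - p) ^ (n - s)
      = (α ^ s * (1 - α) ^ (n - s)) * (x1 ^ s * x2 ^ (n - s)) := by
    rw [hx1, hx2, div_pow, div_pow]
    field_simp
  rw [hsplit]
  nlinarith [hkey, pow_pos hα0 s, pow_pos h1α (n - s), mul_pos (pow_pos hα0 s) (pow_pos h1α (n-s)),
    mul_nonneg (pow_nonneg hx1p s) (pow_nonneg hx2p (n-s))]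

/-- key per-path bound: an upper-stopped path's `p`-weight is at most `ε · W` -/
lemma path_weight_le {p α ε : ℝ} (hp : p ∈ Set.Ioo (0:ℝ) 1) (hα : α ∈ Set.Ioo (0:ℝ) 1)
    (hε : ε ∈ Set.Ioo (0:ℝ) 1) (hpα : p ≤ α) {n s : ℕ}
    (hsn : s ≤ n) (hu : csmUpper α ε n ≤ (s:ℤ)) :
    p ^ s * (1 - p) ^ (n - s) ≤ ε * Wt n s := by
  have hsα : (n:ℝ) * α < s := by
    have h1 := csmUpper_gt hα hε n
    have h2 : ((csmUpper α ε n : ℤ) : ℝ) ≤ ((s:ℤ) : ℝ) := by exact_mod_cast hu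
    push_cast at h2 ⊢
    linarith
  have hw := weight_mono hp.1 hpα hα.2 hsn hsα
  have ht := upper_tail hα hε hsn hu
  have hC : (0:ℝ) < ((n:ℝ) + 1) * (n.choose s : ℝ) := by
    have : (0:ℝ) < (n.choose s : ℝ) := by exact_mod_cast Nat.choose_pos hsn
    positivity
  have : α ^ s * (1 - α) ^ (n - s) ≤ ε * Wt n s := by
    unfold binomPMF at ht
    have heq : α ^ s * (1 - α) ^ (n - s)
        = (((n:ℝ)+1) * (n.choose s:ℝ))⁻¹
          * (((n:ℝ)+1) * ((n.choose s:ℝ) * α ^ s * (1 - α) ^ (n - s))) := by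
      have hc0 : (n.choose s:ℝ) ≠ 0 := by exact_mod_cast (Nat.choose_pos hsn).ne'
      field_simp
    rw [heq]
    calc (((n:ℝ)+1) * (n.choose s:ℝ))⁻¹
          * (((n:ℝ)+1) * ((n.choose s:ℝ) * α ^ s * (1 - α) ^ (n - s)))
        ≤ (((n:ℝ)+1) * (n.choose s:ℝ))⁻¹ * ε :=
          mul_le_mul_of_nonneg_left ht (inv_nonneg.2 hC.le)
      _ = ε * Wt n s := by unfold Wt; ring
  linarith [hw]

/-- eventually the lower boundary is nonnegative -/
lemma exists_csmLower_nonneg {α ε : ℝ} (hα : α ∈ Set.Ioo (0:ℝ) 1) (hε : ε ∈ Set.Ioo (0:ℝ) 1) :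
    ∃ n, 0 ≤ csmLower α ε n := by
  set r : ℝ := 1 - α with hrdef
  have hr0 : 0 ≤ r := by have := hα.2; simp [hrdef]; linarith
  have hr1 : r < 1 := by have := hα.1; simp [hrdef]; linarith
  have hnorm : ‖r‖ < 1 := by rw [Real.norm_eq_abs, abs_of_nonneg hr0]; exact hr1
  have h1 : Summable (fun n : ℕ => (n:ℝ) ^ 1 * r ^ n) :=
    summable_pow_mul_geometric_of_norm_lt_one 1 hnorm
  have h0 : Summable (fun n : ℕ => r ^ n) := summable_geometric_of_lt_one hr0 hr1
  have t1 := h1.tendsto_atTop_zero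
  have t0 := h0.tendsto_atTop_zero
  have tt : Filter.Tendsto (fun n : ℕ => ((n:ℝ) + 1) * r ^ n) Filter.atTop (nhds 0) := by
    have := t1.add t0
    simp only [add_zero] at this
    convert this using 2 with n
    · push_cast; ring
  have hev := tt.eventually_lt_const hε.1
  obtain ⟨n, hn⟩ := hev.exists
  refine ⟨n, ?_⟩
  rw [csmLower_eq_min' hα hε n]
  have hmem := Finset.min'_mem (bset α ε n) (bset_nonempty hα hε n)
  have hprop := (mem_bset.1 hmem).2
  have hne0 : (bset α ε n).min' (bset_nonempty hα hε n) ≠ 0 := by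
    intro h0'
    rw [h0'] at hprop
    have : binomPMF n α 0 = r ^ n := by
      unfold binomPMF
      simp [hrdef]
    rw [this] at hprop
    linarith
  have : 1 ≤ (bset α ε n).min' (bset_nonempty hα hε n) := Nat.one_le_iff_ne_zero.2 hne0
  have : (1:ℤ) ≤ (((bset α ε n).min' (bset_nonempty hα hε n) : ℕ) : ℤ) := by exact_mod_cast this
  omega

/- ### paths encoded as natural numbers via binary digits -/

/-- partial sums of the binary digits of `m` -/
def pc (m k : ℕ) : ℕ := ∑ i ∈ Finset.range k, (if Nat.testBit m i then 1 else 0)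

/-- the stopping condition as a predicate on `(n, s)` -/
def stopped (α ε : ℝ) (n s : ℕ) : Prop :=
  csmUpper α ε n ≤ (s:ℤ) ∨ (s:ℤ) ≤ csmLower α ε n

open Classical in
/-- paths of length `n` that stop for the first time at `n` -/
noncomputable def Fst (α ε : ℝ) (n : ℕ) : Finset ℕ :=
  (Finset.range (2^n)).filter
    (fun m => (∀ k < n, ¬ stopped α ε k (pc m k)) ∧ stopped α ε n (pc m n))

open Classical in
/-- paths of length `n` that have not stopped by time `n` -/
noncomputable def Ast (α ε : ℝ) (n : ℕ) : Finset ℕ :=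
  (Finset.range (2^n)).filter (fun m => ∀ k ≤ n, ¬ stopped α ε k (pc m k))

open Classical in
/-- paths of length `n` that stop for the first time at `n`, at the upper boundary -/
noncomputable def FstU (α ε : ℝ) (n : ℕ) : Finset ℕ :=
  (Fst α ε n).filter (fun m => csmUpper α ε n ≤ (pc m n : ℤ))

lemma pc_le (m k : ℕ) : pc m k ≤ k := by
  calc pc m k ≤ ∑ _i ∈ Finset.range k, 1 := Finset.sum_le_sum (fun i _ => by split <;> omega)
    _ = k := by simp

lemma pc_succ (m N : ℕ) : pc m (N+1) = pc m N + (if Nat.testBit m N then 1 else 0) :=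
  Finset.sum_range_succ _ N

lemma pc_add_pow {m N : ℕ} (hm : m < 2^N) {k : ℕ} (hk : k ≤ N) :
    pc (m + 2^N) k = pc m k := by
  unfold pc
  refine Finset.sum_congr rfl fun i hi => ?_
  have hiN : i < N := lt_of_lt_of_le (Finset.mem_range.1 hi) hk
  have := Nat.testBit_two_pow_mul_add 1 hm i
  rw [show 2^N * 1 + m = m + 2^N by ring] at this
  rw [this, if_pos hiN]

lemma pc_mod_pow (m' N : ℕ) {k : ℕ} (hk : k ≤ N) : pc (m' % 2^N) k = pc m' k := by
  unfold pc
  refine Finset.sum_congr rfl fun i hi => ?_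
  have hiN : i < N := lt_of_lt_of_le (Finset.mem_range.1 hi) hk
  rw [Nat.testBit_mod_two_pow]
  simp [hiN]

lemma pc_succ_self {m N : ℕ} (hm : m < 2^N) : pc m (N+1) = pc m N := by
  rw [pc_succ, Nat.testBit_lt_two_pow hm]
  simp

lemma pc_succ_add {m N : ℕ} (hm : m < 2^N) : pc (m + 2^N) (N+1) = pc m N + 1 := by
  rw [pc_succ]
  have h1 : (m + 2^N).testBit N = true := by
    have := Nat.testBit_two_pow_mul_add 1 hm N
    rw [show 2^N * 1 + m = m + 2^N by ring] at this
    simpa using this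
  rw [h1, pc_add_pow hm le_rfl]
  simp

lemma pc_zero (k : ℕ) : pc 0 k = 0 := by
  unfold pc
  simp [Nat.zero_testBit]

lemma csmLower_neg_at_zero {α ε : ℝ} (hα : α ∈ Set.Ioo (0:ℝ) 1) (hε : ε ∈ Set.Ioo (0:ℝ) 1) :
    csmLower α ε 0 < 0 := by
  have := csmLower_lt hα hε 0
  simp only [Nat.cast_zero, zero_mul] at this
  exact_mod_cast this

lemma not_stopped_zero {α ε : ℝ} (hα : α ∈ Set.Ioo (0:ℝ) 1) (hε : ε ∈ Set.Ioo (0:ℝ) 1) :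
    ¬ stopped α ε 0 0 := by
  rintro (h | h)
  · have := one_le_csmUpper α ε 0
    omega
  · have := csmLower_neg_at_zero hα hε
    omega

theorem tree_sum {α ε : ℝ} (hα : α ∈ Set.Ioo (0:ℝ) 1) (hε : ε ∈ Set.Ioo (0:ℝ) 1) :
    ∀ N : ℕ, ((∑ n ∈ Finset.range (N+1), ∑ m ∈ Fst α ε n, Wt n (pc m n))
      + ∑ m ∈ Ast α ε N, Wt N (pc m N)) = 1 := by
  classical
  intro N
  induction N with
  | zero =>
    have hF : Fst α ε 0 = ∅ := by
      apply Finset.filter_false_of_mem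
      intro m hm
      rw [Finset.mem_range] at hm
      interval_cases m
      rw [pc_zero]
      simp [not_stopped_zero hα hε]
    have hA : Ast α ε 0 = {0} := by
      apply Finset.ext
      intro m
      simp only [Ast, Finset.mem_filter, Finset.mem_range, Finset.mem_singleton]
      constructor
      · rintro ⟨hm, _⟩; omega
      · rintro rfl
        refine ⟨by norm_num, ?_⟩
        intro k hk
        have : k = 0 := by omega
        subst this
        rw [pc_zero]
        exact not_stopped_zero hα hε
    rw [Finset.sum_range_one, hF, hA]
    simp [Wt, pc_zero]
  | succ N ih =>
    set B : Finset ℕ := (Finset.range (2^(N+1))).filter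
      (fun m => ∀ k ≤ N, ¬ stopped α ε k (pc m k)) with hB
    have hFeq : Fst α ε (N+1) = B.filter (fun m => stopped α ε (N+1) (pc m (N+1))) := by
      unfold Fst
      rw [hB, Finset.filter_filter]
      apply Finset.filter_congr
      intro m _
      constructor
      · rintro ⟨h1, h2⟩; exact ⟨fun k hk => h1 k (by omega), h2⟩
      · rintro ⟨h1, h2⟩; exact ⟨fun k hk => h1 k (by omega), h2⟩
    have hAeq : Ast α ε (N+1) = B.filter (fun m => ¬ stopped α ε (N+1) (pc m (N+1))) := by
      unfold Ast
      rw [hB, Finset.filter_filter]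
      apply Finset.filter_congr
      intro m _
      constructor
      · intro h
        exact ⟨fun k hk => h k (by omega), h (N+1) le_rfl⟩
      · rintro ⟨h1, h2⟩ k hk
        rcases Nat.lt_succ_iff_lt_or_eq.1 (Nat.lt_succ_of_le hk) with h | h
        · exact h1 k (by omega)
        · subst h; exact h2
    have hsplit : (∑ m ∈ Fst α ε (N+1), Wt (N+1) (pc m (N+1)))
        + ∑ m ∈ Ast α ε (N+1), Wt (N+1) (pc m (N+1))
        = ∑ m ∈ B, Wt (N+1) (pc m (N+1)) := by
      rw [hFeq, hAeq]
      exact Finset.sum_filter_add_sum_filter_not B _ _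
    have hBdecomp : B = (Ast α ε N) ∪ (Ast α ε N).image (· + 2^N) := by
      apply Finset.ext
      intro m'
      simp only [Finset.mem_union, Finset.mem_image, hB, Finset.mem_filter, Finset.mem_range,
        Ast]
      constructor
      · rintro ⟨hlt, hcond⟩
        rcases Nat.lt_or_ge m' (2^N) with hsm | hsm
        · left; exact ⟨hsm, hcond⟩
        · right
          refine ⟨m' - 2^N, ⟨?_, ?_⟩, by omega⟩
          · have : 2^(N+1) = 2^N + 2^N := by ring
            omega
          · intro k hk
            have hmod : m' - 2^N + 2^N = m' := by omega
            have := pc_add_pow (m := m' - 2^N) (N := N) (by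
              have : 2^(N+1) = 2^N + 2^N := by ring
              omega) hk
            rw [hmod] at this
            rw [← this]
            exact hcond k hk
      · rintro (⟨hlt, hcond⟩ | ⟨m, ⟨hlt, hcond⟩, rfl⟩)
        · constructor
          · have : 2^(N+1) = 2^N + 2^N := by ring
            omega
          · exact hcond
        · constructor
          · have : 2^(N+1) = 2^N + 2^N := by ring
            omega
          · intro k hk
            rw [pc_add_pow hlt hk]
            exact hcond k hk
    have hdisj : Disjoint (Ast α ε N) ((Ast α ε N).image (· + 2^N)) := by
      rw [Finset.disjoint_left]
      intro a ha hb
      have h1 : a < 2^N := Finset.mem_range.1 (Finset.mem_of_mem_filter a ha)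
      obtain ⟨b, _, hba⟩ := Finset.mem_image.1 hb
      omega
    have hsum2 : ∑ m ∈ B, Wt (N+1) (pc m (N+1))
        = ∑ m ∈ Ast α ε N, (Wt (N+1) (pc m (N+1)) + Wt (N+1) (pc (m + 2^N) (N+1))) := by
      rw [hBdecomp, Finset.sum_union hdisj, Finset.sum_image (by intro x _ y _ h; simp only at h; omega),
        Finset.sum_add_distrib]
    have hsum3 : ∑ m ∈ Ast α ε N, (Wt (N+1) (pc m (N+1)) + Wt (N+1) (pc (m + 2^N) (N+1)))
        = ∑ m ∈ Ast α ε N, Wt N (pc m N) := by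
      refine Finset.sum_congr rfl fun m hm => ?_
      have hlt : m < 2^N := Finset.mem_range.1 (Finset.mem_of_mem_filter m hm)
      rw [pc_succ_self hlt, pc_succ_add hlt]
      exact (Wt_succ N (pc m N) (pc_le m N)).symm
    rw [Finset.sum_range_succ]
    calc (∑ n ∈ Finset.range (N+1), ∑ m ∈ Fst α ε n, Wt n (pc m n))
          + (∑ m ∈ Fst α ε (N+1), Wt (N+1) (pc m (N+1)))
          + ∑ m ∈ Ast α ε (N+1), Wt (N+1) (pc m (N+1))
        = (∑ n ∈ Finset.range (N+1), ∑ m ∈ Fst α ε n, Wt n (pc m n))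
          + ∑ m ∈ B, Wt (N+1) (pc m (N+1)) := by rw [← hsplit]; ring
      _ = (∑ n ∈ Finset.range (N+1), ∑ m ∈ Fst α ε n, Wt n (pc m n))
          + ∑ m ∈ Ast α ε N, Wt N (pc m N) := by rw [hsum2, hsum3]
      _ = 1 := ih

/-- the total `W`-mass of upper-stopping paths is at most `1 - 1/(m₀+1)` -/
theorem upper_mass_le {α ε : ℝ} (hα : α ∈ Set.Ioo (0:ℝ) 1) (hε : ε ∈ Set.Ioo (0:ℝ) 1) (N : ℕ) :
    ∑ n ∈ Finset.range N, ∑ m ∈ FstU α ε n, Wt n (pc m n)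
      ≤ 1 - ((Nat.find (exists_csmLower_nonneg hα hε) : ℝ) + 1)⁻¹ := by
  classical
  set m₀ := Nat.find (exists_csmLower_nonneg hα hε) with hm₀
  set K := max N (m₀ + 1) with hK
  have hterm : ∀ n, (0:ℝ) ≤ ∑ m ∈ FstU α ε n, Wt n (pc m n) :=
    fun n => Finset.sum_nonneg fun m _ => Wt_nonneg _ _
  have hmono : ∑ n ∈ Finset.range N, ∑ m ∈ FstU α ε n, Wt n (pc m n)
      ≤ ∑ n ∈ Finset.range K, ∑ m ∈ FstU α ε n, Wt n (pc m n) := by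
    apply Finset.sum_le_sum_of_subset_of_nonneg
    · exact Finset.range_subset_range.2 (le_max_left _ _)
    · intro n _ _; exact hterm n
  -- the all-zeros path stops first (at the lower boundary) at time m₀
  have hzero_mem : 0 ∈ Fst α ε m₀ := by
    unfold Fst
    rw [Finset.mem_filter, Finset.mem_range]
    refine ⟨by positivity, ?_, ?_⟩
    · intro k hk
      rw [pc_zero]
      rintro (h | h)
      · have := one_le_csmUpper α ε k; omega
      · have := Nat.find_min (exists_csmLower_nonneg hα hε) (by omega : k < m₀)
        omega
    · rw [pc_zero]
      right
      simpa using Nat.find_spec (exists_csmLower_nonneg hα hε)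
  have hzero_not : 0 ∉ FstU α ε m₀ := by
    unfold FstU
    rw [Finset.mem_filter]
    rintro ⟨-, h⟩
    rw [pc_zero] at h
    have := one_le_csmUpper α ε m₀
    omega
  have hsub : ∀ n, ∑ m ∈ FstU α ε n, Wt n (pc m n) ≤ ∑ m ∈ Fst α ε n, Wt n (pc m n) := by
    intro n
    apply Finset.sum_le_sum_of_subset_of_nonneg (Finset.filter_subset _ _)
    intro m _ _; exact Wt_nonneg _ _
  have hsub0 : ∑ m ∈ FstU α ε m₀, Wt m₀ (pc m m₀)
      ≤ (∑ m ∈ Fst α ε m₀, Wt m₀ (pc m m₀)) - Wt m₀ 0 := by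
    have h1 : FstU α ε m₀ ⊆ (Fst α ε m₀).erase 0 := by
      intro m hm
      rw [Finset.mem_erase]
      refine ⟨?_, Finset.mem_of_mem_filter m hm⟩
      rintro rfl
      exact hzero_not hm
    calc ∑ m ∈ FstU α ε m₀, Wt m₀ (pc m m₀)
        ≤ ∑ m ∈ (Fst α ε m₀).erase 0, Wt m₀ (pc m m₀) :=
          Finset.sum_le_sum_of_subset_of_nonneg h1 (fun m _ _ => Wt_nonneg _ _)
      _ = (∑ m ∈ Fst α ε m₀, Wt m₀ (pc m m₀)) - Wt m₀ (pc 0 m₀) :=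
          Finset.sum_erase_eq_sub hzero_mem
      _ = (∑ m ∈ Fst α ε m₀, Wt m₀ (pc m m₀)) - Wt m₀ 0 := by rw [pc_zero]
  have hm₀K : m₀ < K := by omega
  have htree : ∑ n ∈ Finset.range K, ∑ m ∈ Fst α ε n, Wt n (pc m n) ≤ 1 := by
    have hstep : ∑ n ∈ Finset.range K, ∑ m ∈ Fst α ε n, Wt n (pc m n)
        ≤ ∑ n ∈ Finset.range (K+1), ∑ m ∈ Fst α ε n, Wt n (pc m n) := by
      apply Finset.sum_le_sum_of_subset_of_nonneg (Finset.range_subset_range.2 (by omega))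
      intro n _ _
      exact Finset.sum_nonneg fun m _ => Wt_nonneg _ _
    have := tree_sum hα hε K
    have hA : 0 ≤ ∑ m ∈ Ast α ε K, Wt K (pc m K) :=
      Finset.sum_nonneg fun m _ => Wt_nonneg _ _
    linarith
  have hchain : ∑ n ∈ Finset.range K, ∑ m ∈ FstU α ε n, Wt n (pc m n)
      ≤ (∑ n ∈ Finset.range K, ∑ m ∈ Fst α ε n, Wt n (pc m n)) - Wt m₀ 0 := by
    have hsplit1 := Finset.sum_erase_eq_sub (f := fun n => ∑ m ∈ FstU α ε n, Wt n (pc m n))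
      (Finset.mem_range.2 hm₀K)
    have hsplit2 := Finset.sum_erase_eq_sub (f := fun n => ∑ m ∈ Fst α ε n, Wt n (pc m n))
      (Finset.mem_range.2 hm₀K)
    have herase : ∑ n ∈ (Finset.range K).erase m₀, ∑ m ∈ FstU α ε n, Wt n (pc m n)
        ≤ ∑ n ∈ (Finset.range K).erase m₀, ∑ m ∈ Fst α ε n, Wt n (pc m n) :=
      Finset.sum_le_sum fun n _ => hsub n
    have e1 : ∑ n ∈ Finset.range K, ∑ m ∈ FstU α ε n, Wt n (pc m n)
        = (∑ n ∈ (Finset.range K).erase m₀, ∑ m ∈ FstU α ε n, Wt n (pc m n))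
          + ∑ m ∈ FstU α ε m₀, Wt m₀ (pc m m₀) := by rw [hsplit1]; ring
    have e2 : ∑ n ∈ Finset.range K, ∑ m ∈ Fst α ε n, Wt n (pc m n)
        = (∑ n ∈ (Finset.range K).erase m₀, ∑ m ∈ Fst α ε n, Wt n (pc m n))
          + ∑ m ∈ Fst α ε m₀, Wt m₀ (pc m m₀) := by rw [hsplit2]; ring
    rw [e1, e2]
    linarith [hsub0]
  have hWm₀ : Wt m₀ 0 = ((m₀ : ℝ) + 1)⁻¹ := by
    unfold Wt
    simp
  calc ∑ n ∈ Finset.range N, ∑ m ∈ FstU α ε n, Wt n (pc m n)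
      ≤ ∑ n ∈ Finset.range K, ∑ m ∈ FstU α ε n, Wt n (pc m n) := hmono
    _ ≤ (∑ n ∈ Finset.range K, ∑ m ∈ Fst α ε n, Wt n (pc m n)) - Wt m₀ 0 := hchain
    _ ≤ 1 - ((m₀ : ℝ) + 1)⁻¹ := by rw [hWm₀] at *; linarith [htree]

/- ### encoding 0/1-sequences as numbers -/

lemma digit_sum_lt {v : ℕ → ℕ} (hv : ∀ i, v i ≤ 1) (n : ℕ) :
    ∑ i ∈ Finset.range n, v i * 2^i < 2^n := by
  induction n with
  | zero => simp
  | succ n ih =>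
    rw [Finset.sum_range_succ]
    have h1 : v n * 2^n ≤ 2^n := by
      have := hv n
      calc v n * 2^n ≤ 1 * 2^n := Nat.mul_le_mul_right _ this
        _ = 2^n := one_mul _
    have : (2:ℕ)^(n+1) = 2^n + 2^n := by ring
    omega

lemma digit_sum_testBit {v : ℕ → ℕ} (hv : ∀ i, v i ≤ 1) (n : ℕ) {j : ℕ} (hj : j < n) :
    (∑ i ∈ Finset.range n, v i * 2^i).testBit j = decide (v j = 1) := by
  induction n with
  | zero => omega
  | succ n ih =>
    rw [Finset.sum_range_succ]
    have hrest : ∑ i ∈ Finset.range n, v i * 2^i < 2^n := digit_sum_lt hv n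
    have hrw : (∑ i ∈ Finset.range n, v i * 2^i) + v n * 2^n
        = 2^n * (v n) + ∑ i ∈ Finset.range n, v i * 2^i := by ring
    rw [hrw, Nat.testBit_two_pow_mul_add _ hrest]
    rcases Nat.lt_or_ge j n with h | h
    · rw [if_pos h]
      exact ih h
    · have : j = n := by omega
      subst this
      rw [if_neg (by omega)]
      simp only [Nat.sub_self]
      rw [Nat.testBit_zero, Nat.mod_eq_of_lt (by have := hv j; omega : v j < 2)]

/- ### cylinder probabilities -/

lemma cylinder_measure {Ω : Type*} [MeasureSpace Ω] [IsProbabilityMeasure (ℙ : Measure Ω)]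
    {p : ℝ} (hp : p ∈ Set.Ioo (0:ℝ) 1) (X : ℕ → Ω → ℕ)
    (hmeas : ∀ i, Measurable (X i))
    (hindep : iIndepFun X ℙ)
    (hval : ∀ i ω, X i ω ≤ 1)
    (hdist : ∀ i, ℙ {ω | X i ω = 1} = ENNReal.ofReal p)
    (n m : ℕ) :
    ℙ (⋂ i ∈ Finset.range n, X i ⁻¹' {(Nat.testBit m i).toNat})
      = ENNReal.ofReal (p ^ (pc m n) * (1 - p) ^ (n - pc m n)) := by
  classical
  have h1 : ∀ i, ℙ (X i ⁻¹' {1}) = ENNReal.ofReal p := by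
    intro i
    rw [show X i ⁻¹' {1} = {ω | X i ω = 1} from rfl]
    exact hdist i
  have h0 : ∀ i, ℙ (X i ⁻¹' {0}) = ENNReal.ofReal (1 - p) := by
    intro i
    have hcompl : X i ⁻¹' {0} = (X i ⁻¹' {1})ᶜ := by
      ext ω
      simp only [Set.mem_preimage, Set.mem_singleton_iff, Set.mem_compl_iff]
      have := hval i ω
      omega
    rw [hcompl, measure_compl ((hmeas i) (measurableSet_singleton 1)) (measure_ne_top _ _),
      h1 i]
    rw [show (ℙ (Set.univ : Set Ω)) = 1 from measure_univ]
    rw [← ENNReal.ofReal_one, ← ENNReal.ofReal_sub 1 hp.1.le]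
  have hprod := hindep.measure_inter_preimage_eq_mul (Finset.range n)
    (sets := fun i => ({(Nat.testBit m i).toNat} : Set ℕ))
    (fun i _ => measurableSet_singleton _)
  rw [hprod]
  have heach : ∀ i, ℙ (X i ⁻¹' {(Nat.testBit m i).toNat})
      = ENNReal.ofReal (if Nat.testBit m i then p else 1 - p) := by
    intro i
    cases h : Nat.testBit m i <;> simp [h, h0 i, h1 i]
  calc ∏ i ∈ Finset.range n, ℙ (X i ⁻¹' {(Nat.testBit m i).toNat})
      = ∏ i ∈ Finset.range n, ENNReal.ofReal (if Nat.testBit m i then p else 1 - p) :=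
        Finset.prod_congr rfl fun i _ => heach i
    _ = ENNReal.ofReal (∏ i ∈ Finset.range n, (if Nat.testBit m i then p else 1 - p)) := by
        rw [ENNReal.ofReal_prod_of_nonneg]
        intro i _
        split
        · exact hp.1.le
        · linarith [hp.2]
    _ = ENNReal.ofReal (p ^ (pc m n) * (1 - p) ^ (n - pc m n)) := by
        congr 1
        rw [Finset.prod_ite]
        simp only [Finset.prod_const]
        have hcard1 : ((Finset.range n).filter (fun i => Nat.testBit m i)).card = pc m n := by
          unfold pc
          rw [Finset.card_filter]
        have hcard2 : ((Finset.range n).filter (fun i => ¬ Nat.testBit m i)).card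
            = n - pc m n := by
          have := Finset.card_filter_add_card_filter_not
            (s := Finset.range n) (p := fun i => Nat.testBit m i)
          rw [Finset.card_range] at this
          have hc1 : ((Finset.range n).filter (fun i => Nat.testBit m i)).card = pc m n := by
            unfold pc
            rw [Finset.card_filter]
          omega
        rw [hcard1, hcard2]

/-- If `p ≤ α`, the CSM estimator satisfies `ℙ_p(p̂ > α) < ε`: the resampling risk of the
confidence sequence method is uniformly bounded by `ε`. -/
theorem stmt10
    (Ω : Type*) [MeasureSpace Ω] [IsProbabilityMeasure (ℙ : Measure Ω)]
    (p α ε : ℝ) (hp : p ∈ Set.Ioo (0:ℝ) 1) (hα : α ∈ Set.Ioo (0:ℝ) 1)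
    (hpα : p ≤ α) (hε : ε ∈ Set.Ioo (0:ℝ) 1)
    (X : ℕ → Ω → ℕ)
    (hmeas : ∀ i, Measurable (X i))
    (hindep : iIndepFun X ℙ)
    (hval : ∀ i ω, X i ω ≤ 1)
    (hdist : ∀ i, ℙ {ω | X i ω = 1} = ENNReal.ofReal p) :
    ℙ {ω | α < csmEstimate α ε (fun n => ((∑ i ∈ Finset.range n, X i ω : ℕ) : ℤ))}
      < ENNReal.ofReal ε := by
  classical
  set m₀ := Nat.find (exists_csmLower_nonneg hα hε) with hm₀def
  set δ : ℝ := ((m₀:ℝ)+1)⁻¹ with hδdef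
  have hδpos : 0 < δ := by rw [hδdef]; positivity
  have hδle : δ ≤ 1 := by
    rw [hδdef]
    rw [inv_le_one_iff₀]
    right
    have : (0:ℝ) ≤ (m₀:ℝ) := Nat.cast_nonneg _
    linarith
  set Cyl : ℕ → ℕ → Set Ω :=
    fun n m => ⋂ i ∈ Finset.range n, X i ⁻¹' {(Nat.testBit m i).toNat} with hCyl
  -- event inclusion
  have hincl : {ω | α < csmEstimate α ε (fun n => ((∑ i ∈ Finset.range n, X i ω : ℕ) : ℤ))}
      ⊆ ⋃ n, ⋃ m ∈ FstU α ε n, Cyl n m := by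
    intro ω hω
    simp only [Set.mem_setOf_eq] at hω
    set Sf : ℕ → ℤ := fun n => ((∑ i ∈ Finset.range n, X i ω : ℕ) : ℤ) with hSf
    by_cases hex : ∃ n, csmStop α ε Sf n
    swap
    · rw [csmEstimate, dif_neg hex] at hω
      linarith
    rw [csmEstimate, dif_pos hex] at hω
    set τ := sInf {n : ℕ | csmStop α ε Sf n} with hτ
    have hτmem : csmStop α ε Sf τ := Nat.sInf_mem hex
    have hτmin : ∀ k, k < τ → ¬ csmStop α ε Sf k := fun k hk => Nat.notMem_of_lt_sInf hk
    have hτpos : 0 < τ := by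
      rcases Nat.eq_zero_or_pos τ with h0 | h; swap; · exact h
      exfalso
      rw [h0] at hτmem
      rcases hτmem with h | h
      · have h1 := one_le_csmUpper α ε 0
        have : Sf 0 = 0 := by simp [hSf]
        omega
      · have h1 := csmLower_neg_at_zero hα hε
        have : Sf 0 = 0 := by simp [hSf]
        omega
    have hup : csmUpper α ε τ ≤ Sf τ := by
      rcases hτmem with h | h; · exact h
      exfalso
      have h1 : ((Sf τ : ℤ) : ℝ) ≤ ((csmLower α ε τ : ℤ) : ℝ) := by exact_mod_cast h
      have h2 := csmLower_lt hα hε τ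
      have hτR : (0:ℝ) < (τ:ℕ) := by exact_mod_cast hτpos
      have h3 : α < ((Sf τ : ℤ) : ℝ) / (τ:ℝ) := hω
      rw [lt_div_iff₀ hτR] at h3
      nlinarith
    -- encode the path as a number
    set m := ∑ i ∈ Finset.range τ, X i ω * 2^i with hm
    have hvω : ∀ i, X i ω ≤ 1 := fun i => hval i ω
    have hmlt : m < 2^τ := digit_sum_lt hvω τ
    have hbit : ∀ j, j < τ → (Nat.testBit m j) = decide (X j ω = 1) :=
      fun j hj => digit_sum_testBit hvω τ hj
    have hpc : ∀ k, k ≤ τ → pc m k = ∑ i ∈ Finset.range k, X i ω := by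
      intro k hk
      unfold pc
      refine Finset.sum_congr rfl fun i hi => ?_
      have hiτ : i < τ := lt_of_lt_of_le (Finset.mem_range.1 hi) hk
      rw [hbit i hiτ]
      have := hvω i
      interval_cases h : X i ω <;> simp
    have hstop_iff : ∀ k, k ≤ τ → (stopped α ε k (pc m k) ↔ csmStop α ε Sf k) := by
      intro k hk
      unfold stopped csmStop
      rw [hpc k hk]
    have hmem : m ∈ FstU α ε τ := by
      unfold FstU Fst
      rw [Finset.mem_filter, Finset.mem_filter, Finset.mem_range]
      refine ⟨⟨hmlt, ?_, ?_⟩, ?_⟩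
      · intro k hk
        rw [hstop_iff k hk.le]
        exact hτmin k hk
      · rw [hstop_iff τ le_rfl]
        exact hτmem
      · rw [hpc τ le_rfl]
        exact_mod_cast hup
    refine Set.mem_iUnion.2 ⟨τ, Set.mem_iUnion₂.2 ⟨m, hmem, ?_⟩⟩
    rw [hCyl]
    refine Set.mem_iInter₂.2 fun i hi => ?_
    rw [Set.mem_preimage, Set.mem_singleton_iff]
    have hiτ : i < τ := Finset.mem_range.1 hi
    rw [hbit i hiτ]
    have := hvω i
    interval_cases h : X i ω <;> simp
  -- measure bound
  have hcylmeas : ∀ n m, ℙ (Cyl n m)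
      = ENNReal.ofReal (p ^ (pc m n) * (1 - p) ^ (n - pc m n)) :=
    fun n m => cylinder_measure hp X hmeas hindep hval hdist n m
  set t : ℕ → ℝ := fun n => ∑ m ∈ FstU α ε n, p ^ (pc m n) * (1 - p) ^ (n - pc m n) with ht
  have htnonneg : ∀ n, 0 ≤ t n := by
    intro n
    apply Finset.sum_nonneg
    intro m _
    have := hp.1; have := hp.2
    have h1p : (0:ℝ) ≤ 1 - p := by linarith
    positivity
  have htle : ∀ n, t n ≤ ε * ∑ m ∈ FstU α ε n, Wt n (pc m n) := by
    intro n
    rw [ht, Finset.mul_sum]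
    apply Finset.sum_le_sum
    intro m hm
    have hu : csmUpper α ε n ≤ ((pc m n : ℕ) : ℤ) := (Finset.mem_filter.1 hm).2
    exact path_weight_le hp hα hε hpα (pc_le m n) hu
  have hmain : ∑' n, ∑ m ∈ FstU α ε n, ℙ (Cyl n m) ≤ ENNReal.ofReal (ε * (1 - δ)) := by
    have heq : ∀ n, ∑ m ∈ FstU α ε n, ℙ (Cyl n m) = ENNReal.ofReal (t n) := by
      intro n
      rw [ht]
      rw [ENNReal.ofReal_sum_of_nonneg]
      · exact Finset.sum_congr rfl fun m _ => hcylmeas n m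
      · intro m _
        have := hp.1; have := hp.2
        have h1p : (0:ℝ) ≤ 1 - p := by linarith
        positivity
    simp only [heq]
    rw [ENNReal.tsum_eq_iSup_sum]
    apply iSup_le
    intro s
    obtain ⟨M, hs⟩ := s.exists_nat_subset_range
    calc ∑ n ∈ s, ENNReal.ofReal (t n)
        ≤ ∑ n ∈ Finset.range M, ENNReal.ofReal (t n) :=
          Finset.sum_le_sum_of_subset hs
      _ = ENNReal.ofReal (∑ n ∈ Finset.range M, t n) :=
          (ENNReal.ofReal_sum_of_nonneg fun n _ => htnonneg n).symm
      _ ≤ ENNReal.ofReal (ε * (1 - δ)) := by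
          apply ENNReal.ofReal_le_ofReal
          have h1 : ∑ n ∈ Finset.range M, t n
              ≤ ε * ∑ n ∈ Finset.range M, ∑ m ∈ FstU α ε n, Wt n (pc m n) := by
            rw [Finset.mul_sum]
            exact Finset.sum_le_sum fun n _ => htle n
          have h2 := upper_mass_le hα hε M
          rw [← hm₀def, ← hδdef] at h2
          nlinarith [hε.1, hε.2]
  calc ℙ {ω | α < csmEstimate α ε (fun n => ((∑ i ∈ Finset.range n, X i ω : ℕ) : ℤ))}
      ≤ ℙ (⋃ n, ⋃ m ∈ FstU α ε n, Cyl n m) := measure_mono hincl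
    _ ≤ ∑' n, ℙ (⋃ m ∈ FstU α ε n, Cyl n m) := measure_iUnion_le _
    _ ≤ ∑' n, ∑ m ∈ FstU α ε n, ℙ (Cyl n m) :=
        ENNReal.tsum_le_tsum fun n => measure_biUnion_finset_le _ _
    _ ≤ ENNReal.ofReal (ε * (1 - δ)) := hmain
    _ < ENNReal.ofReal ε := by
        rw [ENNReal.ofReal_lt_ofReal_iff hε.1]
        nlinarith [hε.1, hδpos, hδle]
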